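/- Pure Braid Lemma for A_{n-1}: for any generator y_k^a of Br_n(A) and any element ω of the pure braid group PBr_n (viewed inside Br_n(A) via y_i ↦ y_i^0), there exists ω' ∈ Br_n, independent of a, such that y_k^a ω = ω' y_k^a. Consequently y_k^a (y_k^0)^{-1} commutes with every element of PBr_n. -/

import Mathlib

/-- Relators of the parametrized braid group `Br_{n+1}(A)` of the introduction:
generators `y i a` for `i : Fin n` (representing `y_{i+1}^a`), `a : A`, with
relations (A1), (A1×A1), (A2). -/
def pRels (n : ℕ) (A : Type) [NonUnitalRing A] : Set (FreeGroup (Fin n × A)) :=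
  {r | (∃ (i : Fin n) (a b : A),
          r = FreeGroup.of (i, a) * FreeGroup.of (i, (0:A)) * FreeGroup.of (i, b) *
              (FreeGroup.of (i, (0:A)) * FreeGroup.of (i, (0:A)) * FreeGroup.of (i, a + b))⁻¹) ∨
       (∃ (i j : Fin n) (a b : A), (i : ℕ) + 2 ≤ (j : ℕ) ∧
          r = FreeGroup.of (i, a) * FreeGroup.of (j, b) *
              (FreeGroup.of (j, b) * FreeGroup.of (i, a))⁻¹) ∨
       (∃ (i j : Fin n) (a b c : A), (i : ℕ) + 1 = (j : ℕ) ∧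
          r = FreeGroup.of (i, a) * FreeGroup.of (j, b) * FreeGroup.of (i, c) *
              (FreeGroup.of (j, c) * FreeGroup.of (i, b + a * c) * FreeGroup.of (j, a))⁻¹)}

/-- The parametrized braid group `Br_{n+1}(A)`. -/
abbrev PBraid (n : ℕ) (A : Type) [NonUnitalRing A] := PresentedGroup (pRels n A)

/-- The generator `y_{i+1}^a` of the parametrized braid group. -/
def y {n : ℕ} {A : Type} [NonUnitalRing A] (i : Fin n) (a : A) : PBraid n A :=
  PresentedGroup.of (i, a)

variable {n : ℕ} {A : Type} [NonUnitalRing A]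

theorem pRel_eq_one {r : FreeGroup (Fin n × A)} (h : r ∈ pRels n A) :
    PresentedGroup.mk (pRels n A) r = 1 :=
  (QuotientGroup.eq_one_iff r).mpr (Subgroup.subset_normalClosure h)

theorem yA1 (i : Fin n) (a b : A) :
    y i a * y i 0 * y i b = y i 0 * y i 0 * y i (a + b) := by
  have h := pRel_eq_one (r := FreeGroup.of (i, a) * FreeGroup.of (i, (0:A)) * FreeGroup.of (i, b) *
              (FreeGroup.of (i, (0:A)) * FreeGroup.of (i, (0:A)) * FreeGroup.of (i, a + b))⁻¹)
      (Or.inl ⟨i, a, b, rfl⟩)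
  simp only [map_mul, map_inv] at h
  exact mul_inv_eq_one.mp h

theorem yComm (i j : Fin n) (hij : (i : ℕ) + 2 ≤ (j : ℕ)) (a b : A) :
    y i a * y j b = y j b * y i a := by
  have h := pRel_eq_one (r := FreeGroup.of (i, a) * FreeGroup.of (j, b) *
              (FreeGroup.of (j, b) * FreeGroup.of (i, a))⁻¹)
      (Or.inr (Or.inl ⟨i, j, a, b, hij, rfl⟩))
  simp only [map_mul, map_inv] at h
  exact mul_inv_eq_one.mp h

theorem yA2 (i j : Fin n) (hij : (i : ℕ) + 1 = (j : ℕ)) (a b c : A) :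
    y i a * y j b * y i c = y j c * y i (b + a * c) * y j a := by
  have h := pRel_eq_one (r := FreeGroup.of (i, a) * FreeGroup.of (j, b) * FreeGroup.of (i, c) *
              (FreeGroup.of (j, c) * FreeGroup.of (i, b + a * c) * FreeGroup.of (j, a))⁻¹)
      (Or.inr (Or.inr ⟨i, j, a, b, c, hij, rfl⟩))
  simp only [map_mul, map_inv] at h
  exact mul_inv_eq_one.mp h

/-! ## ℕ-indexed generators -/

def yA (n : ℕ) (A : Type) [NonUnitalRing A] (i : ℕ) (a : A) : PBraid n A :=
  if h : i < n then y ⟨i, h⟩ a else 1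

def sg (n : ℕ) (A : Type) [NonUnitalRing A] (i : ℕ) : PBraid n A := yA n A i 0

def zz (n : ℕ) (A : Type) [NonUnitalRing A] (i : ℕ) (a : A) : PBraid n A :=
  yA n A i a * (sg n A i)⁻¹

def zz' (n : ℕ) (A : Type) [NonUnitalRing A] (i : ℕ) (a : A) : PBraid n A :=
  (sg n A i)⁻¹ * yA n A i a

theorem yA_lt {i : ℕ} (h : i < n) (a : A) : yA n A i a = y ⟨i, h⟩ a := dif_pos h
theorem yA_ge {i : ℕ} (h : ¬ i < n) (a : A) : yA n A i a = 1 := dif_neg h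

theorem yA_A1 (i : ℕ) (a b : A) :
    yA n A i a * sg n A i * yA n A i b = sg n A i * sg n A i * yA n A i (a + b) := by
  by_cases h : i < n
  · simp only [yA_lt h, sg, yA_lt h]
    exact yA1 ⟨i, h⟩ a b
  · simp [yA_ge h, sg]

theorem yA_comm {i j : ℕ} (hij : i + 2 ≤ j) (a b : A) :
    Commute (yA n A i a) (yA n A j b) := by
  by_cases h : j < n
  · have hi : i < n := by omega
    simp only [yA_lt h, yA_lt hi]
    exact yComm ⟨i, hi⟩ ⟨j, h⟩ hij a b
  · simp [yA_ge h, Commute, SemiconjBy]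

theorem yA_A2 {i : ℕ} (h : i + 1 < n) (a b c : A) :
    yA n A i a * yA n A (i+1) b * yA n A i c
      = yA n A (i+1) c * yA n A i (b + a * c) * yA n A (i+1) a := by
  have hi : i < n := by omega
  simp only [yA_lt h, yA_lt hi]
  exact yA2 ⟨i, hi⟩ ⟨i+1, h⟩ rfl a b c

/-- `y_i^a` commutes with `σ_i²`. -/
theorem yA_sq (i : ℕ) (a : A) :
    Commute (yA n A i a) (sg n A i * sg n A i) := by
  have h := yA_A1 (n := n) (A := A) i a 0
  have h2 := yA_A1 (n := n) (A := A) i 0 a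
  rw [add_zero] at h
  rw [zero_add] at h2
  have : yA n A i a * (sg n A i * sg n A i) = (sg n A i * sg n A i) * yA n A i a := by
    have hs : (sg n A i : PBraid n A) = yA n A i 0 := rfl
    calc yA n A i a * (sg n A i * sg n A i)
        = yA n A i a * sg n A i * yA n A i 0 := by rw [← hs, mul_assoc]
      _ = sg n A i * sg n A i * yA n A i a := h
      _ = (sg n A i * sg n A i) * yA n A i a := rfl
  exact this

theorem zz_sq (i : ℕ) (a : A) : Commute (zz n A i a) (sg n A i * sg n A i) := by
  have h1 := yA_sq (n := n) (A := A) i a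
  have h2 : Commute ((sg n A i)⁻¹) (sg n A i * sg n A i) :=
    ((Commute.refl (sg n A i)).mul_right (Commute.refl _)).inv_left
  simpa [zz] using h1.mul_left h2

theorem zz_zero (i : ℕ) : zz n A i (0:A) = 1 := by simp [zz, sg]

theorem zz'_eq (i : ℕ) (a : A) :
    zz' n A i a = (sg n A i)⁻¹ * zz n A i a * sg n A i := by
  simp only [zz, zz']; group

/-- conjugating `z` by `σ` gives `z'` (both directions). -/
theorem sg_zz_sg_inv (i : ℕ) (a : A) :
    sg n A i * zz n A i a * (sg n A i)⁻¹ = zz' n A i a := by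
  have h := zz_sq (n := n) (A := A) i a
  rw [zz'_eq]
  have : sg n A i * zz n A i a * (sg n A i)⁻¹
      = (sg n A i)⁻¹ * ((sg n A i * sg n A i) * zz n A i a * (sg n A i * sg n A i)⁻¹) * sg n A i := by
    group
  rw [this, ← h.eq]
  group

theorem sg_zz'_sg_inv (i : ℕ) (a : A) :
    sg n A i * zz' n A i a * (sg n A i)⁻¹ = zz n A i a := by
  rw [zz'_eq]; group

/-! ## general conjugation helper -/

theorem commute_conj_iff {G : Type*} [Group G] (g x c : G) :
    Commute (g * x * g⁻¹) c ↔ Commute x (g⁻¹ * c * g) := by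
  constructor
  · intro h
    have he : (g * x * g⁻¹) * c = c * (g * x * g⁻¹) := h.eq
    show x * (g⁻¹ * c * g) = (g⁻¹ * c * g) * x
    have : g⁻¹ * ((g * x * g⁻¹) * c) * g = g⁻¹ * (c * (g * x * g⁻¹)) * g := by rw [he]
    calc x * (g⁻¹ * c * g) = g⁻¹ * ((g * x * g⁻¹) * c) * g := by group
      _ = g⁻¹ * (c * (g * x * g⁻¹)) * g := by rw [he]
      _ = (g⁻¹ * c * g) * x := by group
  · intro h
    have he : x * (g⁻¹ * c * g) = (g⁻¹ * c * g) * x := h.eq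
    show (g * x * g⁻¹) * c = c * (g * x * g⁻¹)
    calc (g * x * g⁻¹) * c = g * (x * (g⁻¹ * c * g)) * g⁻¹ := by group
      _ = g * ((g⁻¹ * c * g) * x) * g⁻¹ := by rw [he]
      _ = c * (g * x * g⁻¹) := by group

/-! ## local adjacent-pair identities -/

section Pair

variable {k : ℕ}

-- braid relation
theorem sg_braid (hk : k + 1 < n) :
    sg n A k * sg n A (k+1) * sg n A k = sg n A (k+1) * sg n A k * sg n A (k+1) := by
  have h := yA_A2 (A := A) hk 0 0 0
  simpa [sg, mul_zero, add_zero] using h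

theorem hbv (hk : k + 1 < n) :
    (sg n A (k+1))⁻¹ * sg n A k * sg n A (k+1)
      = sg n A k * sg n A (k+1) * (sg n A k)⁻¹ := by
  have hb := sg_braid (A := A) hk
  calc (sg n A (k+1))⁻¹ * sg n A k * sg n A (k+1)
      = (sg n A (k+1))⁻¹ * (sg n A k * sg n A (k+1) * sg n A k) * (sg n A k)⁻¹ := by group
    _ = (sg n A (k+1))⁻¹ * (sg n A (k+1) * sg n A k * sg n A (k+1)) * (sg n A k)⁻¹ := by rw [hb]
    _ = sg n A k * sg n A (k+1) * (sg n A k)⁻¹ := by group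

theorem hbu (hk : k + 1 < n) :
    (sg n A k)⁻¹ * sg n A (k+1) * sg n A k
      = sg n A (k+1) * sg n A k * (sg n A (k+1))⁻¹ := by
  have hb := sg_braid (A := A) hk
  calc (sg n A k)⁻¹ * sg n A (k+1) * sg n A k
      = (sg n A k)⁻¹ * (sg n A (k+1) * sg n A k * sg n A (k+1)) * (sg n A (k+1))⁻¹ := by group
    _ = (sg n A k)⁻¹ * (sg n A k * sg n A (k+1) * sg n A k) * (sg n A (k+1))⁻¹ := by rw [hb]
    _ = sg n A (k+1) * sg n A k * (sg n A (k+1))⁻¹ := by group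

-- relation instances
theorem rel_a00 (hk : k + 1 < n) (a : A) :
    yA n A k a * sg n A (k+1) * sg n A k = sg n A (k+1) * sg n A k * yA n A (k+1) a := by
  have h := yA_A2 (A := A) hk a 0 0
  simpa [sg, mul_zero, add_zero] using h

theorem rel_00c (hk : k + 1 < n) (c : A) :
    sg n A k * sg n A (k+1) * yA n A k c = yA n A (k+1) c * sg n A k * sg n A (k+1) := by
  have h := yA_A2 (A := A) hk 0 0 c
  simpa [sg, zero_mul, add_zero, zero_add] using h

theorem rel_0b0 (hk : k + 1 < n) (b : A) :
    sg n A k * yA n A (k+1) b * sg n A k = sg n A (k+1) * yA n A k b * sg n A (k+1) := by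
  have h := yA_A2 (A := A) hk 0 b 0
  simpa [sg, zero_mul, mul_zero, add_zero] using h

-- E1 : z * (vu) = (vu) * w
theorem E1 (hk : k + 1 < n) (a : A) :
    zz n A k a * (sg n A (k+1) * sg n A k)
      = (sg n A (k+1) * sg n A k) * zz n A (k+1) a := by
  have hb := sg_braid (A := A) hk
  have h1 := rel_a00 (A := A) hk a
  apply mul_right_cancel (b := sg n A (k+1))
  calc zz n A k a * (sg n A (k+1) * sg n A k) * sg n A (k+1)
      = zz n A k a * (sg n A (k+1) * sg n A k * sg n A (k+1)) := by group
    _ = zz n A k a * (sg n A k * sg n A (k+1) * sg n A k) := by rw [hb]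
    _ = yA n A k a * sg n A (k+1) * sg n A k := by simp only [zz]; group
    _ = sg n A (k+1) * sg n A k * yA n A (k+1) a := h1
    _ = sg n A (k+1) * sg n A k * zz n A (k+1) a * sg n A (k+1) := by simp only [zz, sg]; group

-- E2 : (uv) * z = w * (uv)
theorem E2 (hk : k + 1 < n) (a : A) :
    (sg n A k * sg n A (k+1)) * zz n A k a
      = zz n A (k+1) a * (sg n A k * sg n A (k+1)) := by
  have hb := sg_braid (A := A) hk
  have h2 := rel_00c (A := A) hk a
  calc (sg n A k * sg n A (k+1)) * zz n A k a
      = (sg n A k * sg n A (k+1) * yA n A k a) * (sg n A k)⁻¹ := by simp only [zz, sg]; group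
    _ = (yA n A (k+1) a * sg n A k * sg n A (k+1)) * (sg n A k)⁻¹ := by rw [h2]
    _ = yA n A (k+1) a * (sg n A (k+1))⁻¹ * (sg n A (k+1) * sg n A k * sg n A (k+1)) * (sg n A k)⁻¹ := by group
    _ = yA n A (k+1) a * (sg n A (k+1))⁻¹ * (sg n A k * sg n A (k+1) * sg n A k) * (sg n A k)⁻¹ := by rw [hb]
    _ = zz n A (k+1) a * (sg n A k * sg n A (k+1)) := by simp only [zz, sg]; group

theorem C2 (hk : k + 1 < n) (a : A) :
    sg n A k * zz n A (k+1) a * (sg n A k)⁻¹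
      = (sg n A (k+1))⁻¹ * zz n A k a * sg n A (k+1) := by
  have e : zz n A (k+1) a
      = (sg n A (k+1) * sg n A k)⁻¹ * (zz n A k a * (sg n A (k+1) * sg n A k)) := by
    rw [E1 (A := A) hk a]; group
  rw [e]; group

theorem C1 (hk : k + 1 < n) (a : A) :
    (sg n A k)⁻¹ * zz n A (k+1) a * sg n A k
      = sg n A (k+1) * zz n A k a * (sg n A (k+1))⁻¹ := by
  have e : zz n A (k+1) a
      = ((sg n A k * sg n A (k+1)) * zz n A k a) * (sg n A k * sg n A (k+1))⁻¹ := by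
    rw [E2 (A := A) hk a]; group
  rw [e]; group

theorem C3 (hk : k + 1 < n) (a : A) :
    sg n A k * zz n A (k+1) a * (sg n A k)⁻¹
      = sg n A (k+1) * zz n A k a * (sg n A (k+1))⁻¹ := by
  have hb := sg_braid (A := A) hk
  have h3 := rel_0b0 (A := A) hk a
  apply mul_right_cancel (b := sg n A k * sg n A (k+1) * sg n A k)
  calc sg n A k * zz n A (k+1) a * (sg n A k)⁻¹ * (sg n A k * sg n A (k+1) * sg n A k)
      = sg n A k * (zz n A (k+1) a * sg n A (k+1)) * sg n A k := by group
    _ = sg n A k * yA n A (k+1) a * sg n A k := by simp only [zz, sg]; group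
    _ = sg n A (k+1) * yA n A k a * sg n A (k+1) := h3
    _ = sg n A (k+1) * zz n A k a * (sg n A (k+1))⁻¹ * (sg n A (k+1) * sg n A k * sg n A (k+1)) := by
        simp only [zz, sg]; group
    _ = sg n A (k+1) * zz n A k a * (sg n A (k+1))⁻¹ * (sg n A k * sg n A (k+1) * sg n A k) := by
        rw [hb]

theorem K1 (hk : k + 1 < n) (a : A) :
    Commute (zz n A k a) (sg n A (k+1) * sg n A (k+1)) := by
  have e := (C2 (A := A) hk a).symm.trans (C3 (A := A) hk a)
  show zz n A k a * _ = _ * zz n A k a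
  calc zz n A k a * (sg n A (k+1) * sg n A (k+1))
      = sg n A (k+1) * ((sg n A (k+1))⁻¹ * zz n A k a * sg n A (k+1)) * sg n A (k+1) := by group
    _ = sg n A (k+1) * (sg n A (k+1) * zz n A k a * (sg n A (k+1))⁻¹) * sg n A (k+1) := by rw [e]
    _ = (sg n A (k+1) * sg n A (k+1)) * zz n A k a := by group

theorem K2 (hk : k + 1 < n) (a : A) :
    Commute (zz n A (k+1) a) (sg n A k * sg n A k) := by
  have e2 : (sg n A k)⁻¹ * zz n A (k+1) a * sg n A k
      = sg n A k * zz n A (k+1) a * (sg n A k)⁻¹ :=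
    (C1 (A := A) hk a).trans (C3 (A := A) hk a).symm
  show zz n A (k+1) a * _ = _ * zz n A (k+1) a
  calc zz n A (k+1) a * (sg n A k * sg n A k)
      = sg n A k * ((sg n A k)⁻¹ * zz n A (k+1) a * sg n A k) * sg n A k := by group
    _ = sg n A k * (sg n A k * zz n A (k+1) a * (sg n A k)⁻¹) * sg n A k := by rw [e2]
    _ = (sg n A k * sg n A k) * zz n A (k+1) a := by group

end Pair

section Pair2

variable {k : ℕ}

theorem hbv' (hk : k + 1 < n) :
    (sg n A (k+1))⁻¹ * (sg n A k)⁻¹ * sg n A (k+1)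
      = sg n A k * (sg n A (k+1))⁻¹ * (sg n A k)⁻¹ := by
  calc (sg n A (k+1))⁻¹ * (sg n A k)⁻¹ * sg n A (k+1)
      = ((sg n A (k+1))⁻¹ * sg n A k * sg n A (k+1))⁻¹ := by group
    _ = (sg n A k * sg n A (k+1) * (sg n A k)⁻¹)⁻¹ := by rw [hbv (A := A) hk]
    _ = sg n A k * (sg n A (k+1))⁻¹ * (sg n A k)⁻¹ := by group

theorem hbv2 (hk : k + 1 < n) :
    sg n A (k+1) * sg n A k * (sg n A (k+1))⁻¹
      = (sg n A k)⁻¹ * sg n A (k+1) * sg n A k := by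
  have hb := sg_braid (A := A) hk
  calc sg n A (k+1) * sg n A k * (sg n A (k+1))⁻¹
      = (sg n A k)⁻¹ * (sg n A k * sg n A (k+1) * sg n A k) * (sg n A (k+1))⁻¹ := by group
    _ = (sg n A k)⁻¹ * (sg n A (k+1) * sg n A k * sg n A (k+1)) * (sg n A (k+1))⁻¹ := by rw [hb]
    _ = (sg n A k)⁻¹ * sg n A (k+1) * sg n A k := by group

theorem hbv2' (hk : k + 1 < n) :
    sg n A (k+1) * (sg n A k)⁻¹ * (sg n A (k+1))⁻¹
      = (sg n A k)⁻¹ * (sg n A (k+1))⁻¹ * sg n A k := by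
  calc sg n A (k+1) * (sg n A k)⁻¹ * (sg n A (k+1))⁻¹
      = (sg n A (k+1) * sg n A k * (sg n A (k+1))⁻¹)⁻¹ := by group
    _ = ((sg n A k)⁻¹ * sg n A (k+1) * sg n A k)⁻¹ := by rw [hbv2 (A := A) hk]
    _ = (sg n A k)⁻¹ * (sg n A (k+1))⁻¹ * sg n A k := by group

theorem Q2 (hk : k + 1 < n) (a : A) :
    (sg n A (k+1))⁻¹ * zz' n A k a * sg n A (k+1)
      = sg n A k * zz' n A (k+1) a * (sg n A k)⁻¹ := by
  calc (sg n A (k+1))⁻¹ * zz' n A k a * sg n A (k+1)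
      = ((sg n A (k+1))⁻¹ * (sg n A k)⁻¹ * sg n A (k+1)) *
          ((sg n A (k+1))⁻¹ * zz n A k a * sg n A (k+1)) *
          ((sg n A (k+1))⁻¹ * sg n A k * sg n A (k+1)) := by rw [zz'_eq]; group
    _ = ((sg n A (k+1))⁻¹ * (sg n A k)⁻¹ * sg n A (k+1)) *
          (sg n A k * zz n A (k+1) a * (sg n A k)⁻¹) *
          ((sg n A (k+1))⁻¹ * sg n A k * sg n A (k+1)) := by rw [← C2 (A := A) hk a]
    _ = (sg n A k * (sg n A (k+1))⁻¹ * (sg n A k)⁻¹) *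
          (sg n A k * zz n A (k+1) a * (sg n A k)⁻¹) *
          (sg n A k * sg n A (k+1) * (sg n A k)⁻¹) := by
        rw [hbv (A := A) hk, hbv' (A := A) hk]
    _ = sg n A k * ((sg n A (k+1))⁻¹ * zz n A (k+1) a * sg n A (k+1)) * (sg n A k)⁻¹ := by group
    _ = sg n A k * zz' n A (k+1) a * (sg n A k)⁻¹ := by rw [← zz'_eq]

theorem Q1 (hk : k + 1 < n) (a : A) :
    sg n A (k+1) * zz' n A k a * (sg n A (k+1))⁻¹
      = (sg n A k)⁻¹ * zz' n A (k+1) a * sg n A k := by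
  calc sg n A (k+1) * zz' n A k a * (sg n A (k+1))⁻¹
      = (sg n A (k+1) * (sg n A k)⁻¹ * (sg n A (k+1))⁻¹) *
          (sg n A (k+1) * zz n A k a * (sg n A (k+1))⁻¹) *
          (sg n A (k+1) * sg n A k * (sg n A (k+1))⁻¹) := by rw [zz'_eq]; group
    _ = (sg n A (k+1) * (sg n A k)⁻¹ * (sg n A (k+1))⁻¹) *
          (sg n A k * zz n A (k+1) a * (sg n A k)⁻¹) *
          (sg n A (k+1) * sg n A k * (sg n A (k+1))⁻¹) := by rw [← C3 (A := A) hk a]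
    _ = ((sg n A k)⁻¹ * (sg n A (k+1))⁻¹ * sg n A k) *
          (sg n A k * zz n A (k+1) a * (sg n A k)⁻¹) *
          ((sg n A k)⁻¹ * sg n A (k+1) * sg n A k) := by
        rw [hbv2 (A := A) hk, hbv2' (A := A) hk]
    _ = (sg n A k)⁻¹ * ((sg n A (k+1))⁻¹ *
          ((sg n A k * sg n A k) * zz n A (k+1) a * (sg n A k * sg n A k)⁻¹) *
          sg n A (k+1)) * sg n A k := by group
    _ = (sg n A k)⁻¹ * ((sg n A (k+1))⁻¹ *
          (zz n A (k+1) a * (sg n A k * sg n A k) * (sg n A k * sg n A k)⁻¹) *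
          sg n A (k+1)) * sg n A k := by rw [← (K2 (A := A) hk a).eq]
    _ = (sg n A k)⁻¹ * ((sg n A (k+1))⁻¹ * zz n A (k+1) a * sg n A (k+1)) * sg n A k := by group
    _ = (sg n A k)⁻¹ * zz' n A (k+1) a * sg n A k := by rw [← zz'_eq]

theorem K2' (hk : k + 1 < n) (a : A) :
    Commute (zz' n A (k+1) a) (sg n A k * sg n A k) := by
  have A1 : Commute (sg n A (k+1) * zz n A k a * (sg n A (k+1))⁻¹)
      (sg n A (k+1) * sg n A (k+1)) := by
    apply (commute_conj_iff _ _ _).mpr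
    have e : (sg n A (k+1))⁻¹ * (sg n A (k+1) * sg n A (k+1)) * sg n A (k+1)
        = sg n A (k+1) * sg n A (k+1) := by group
    rw [e]; exact K1 (A := A) hk a
  have A2 : Commute (sg n A k * zz n A (k+1) a * (sg n A k)⁻¹)
      (sg n A (k+1) * sg n A (k+1)) := by
    rw [C3 (A := A) hk a]; exact A1
  have A3 : Commute (zz n A (k+1) a)
      ((sg n A k)⁻¹ * (sg n A (k+1) * sg n A (k+1)) * sg n A k) :=
    (commute_conj_iff _ _ _).mp A2
  have e4 : (sg n A k)⁻¹ * (sg n A (k+1) * sg n A (k+1)) * sg n A k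
      = sg n A (k+1) * (sg n A k * sg n A k) * (sg n A (k+1))⁻¹ := by
    calc (sg n A k)⁻¹ * (sg n A (k+1) * sg n A (k+1)) * sg n A k
        = ((sg n A k)⁻¹ * sg n A (k+1) * sg n A k) *
            ((sg n A k)⁻¹ * sg n A (k+1) * sg n A k) := by group
      _ = (sg n A (k+1) * sg n A k * (sg n A (k+1))⁻¹) *
            (sg n A (k+1) * sg n A k * (sg n A (k+1))⁻¹) := by rw [hbu (A := A) hk]
      _ = sg n A (k+1) * (sg n A k * sg n A k) * (sg n A (k+1))⁻¹ := by group
  rw [e4] at A3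
  have he := A3.eq
  rw [zz'_eq]
  show _ * _ = _ * _
  calc ((sg n A (k+1))⁻¹ * zz n A (k+1) a * sg n A (k+1)) * (sg n A k * sg n A k)
      = (sg n A (k+1))⁻¹ *
          (zz n A (k+1) a * (sg n A (k+1) * (sg n A k * sg n A k) * (sg n A (k+1))⁻¹)) *
          sg n A (k+1) := by group
    _ = (sg n A (k+1))⁻¹ *
          ((sg n A (k+1) * (sg n A k * sg n A k) * (sg n A (k+1))⁻¹) * zz n A (k+1) a) *
          sg n A (k+1) := by rw [he]
    _ = (sg n A k * sg n A k) * ((sg n A (k+1))⁻¹ * zz n A (k+1) a * sg n A (k+1)) := by group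

theorem eK (hk : k + 1 < n) (a : A) :
    (sg n A k)⁻¹ * zz' n A (k+1) a * sg n A k
      = sg n A k * zz' n A (k+1) a * (sg n A k)⁻¹ := by
  have he := (K2' (A := A) hk a).eq
  calc (sg n A k)⁻¹ * zz' n A (k+1) a * sg n A k
      = (sg n A k)⁻¹ * (zz' n A (k+1) a * (sg n A k * sg n A k)) * (sg n A k)⁻¹ := by group
    _ = (sg n A k)⁻¹ * ((sg n A k * sg n A k) * zz' n A (k+1) a) * (sg n A k)⁻¹ := by rw [he]
    _ = sg n A k * zz' n A (k+1) a * (sg n A k)⁻¹ := by group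

theorem K1' (hk : k + 1 < n) (a : A) :
    Commute (zz' n A k a) (sg n A (k+1) * sg n A (k+1)) := by
  have e5 : (sg n A (k+1))⁻¹ * zz' n A k a * sg n A (k+1)
      = sg n A (k+1) * zz' n A k a * (sg n A (k+1))⁻¹ :=
    (Q2 (A := A) hk a).trans ((Q1 (A := A) hk a).trans (eK (A := A) hk a)).symm
  show _ * _ = _ * _
  calc zz' n A k a * (sg n A (k+1) * sg n A (k+1))
      = sg n A (k+1) * ((sg n A (k+1))⁻¹ * zz' n A k a * sg n A (k+1)) * sg n A (k+1) := by group
    _ = sg n A (k+1) * (sg n A (k+1) * zz' n A k a * (sg n A (k+1))⁻¹) * sg n A (k+1) := by rw [e5]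
    _ = (sg n A (k+1) * sg n A (k+1)) * zz' n A k a := by group

theorem Dlem' (hk : k + 1 < n) (a : A) :
    sg n A k * zz' n A (k+1) a * (sg n A k)⁻¹
      = sg n A (k+1) * zz' n A k a * (sg n A (k+1))⁻¹ :=
  ((eK (A := A) hk a).symm.trans (Q1 (A := A) hk a).symm)

theorem E2' (hk : k + 1 < n) (a : A) :
    (sg n A k * sg n A (k+1)) * zz' n A k a
      = zz' n A (k+1) a * (sg n A k * sg n A (k+1)) := by
  calc (sg n A k * sg n A (k+1)) * zz' n A k a
      = sg n A k * (sg n A (k+1) * zz' n A k a * (sg n A (k+1))⁻¹) * sg n A (k+1) := by group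
    _ = sg n A k * ((sg n A k)⁻¹ * zz' n A (k+1) a * sg n A k) * sg n A (k+1) := by
        rw [Q1 (A := A) hk a]
    _ = zz' n A (k+1) a * (sg n A k * sg n A (k+1)) := by group

end Pair2

/-! ## conjugating words -/

def Cc (n : ℕ) (A : Type) [NonUnitalRing A] (i : ℕ) : ℕ → PBraid n A
  | 0 => 1
  | (j+1) => if i + 1 ≤ j then sg n A j * Cc n A i j else 1

theorem Cc_succ {i j : ℕ} (h : i + 1 ≤ j) : Cc n A i (j+1) = sg n A j * Cc n A i j := if_pos h

theorem Cc_base {i j : ℕ} (h : j ≤ i + 1) : Cc n A i j = 1 := by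
  cases j with
  | zero => rfl
  | succ m => exact if_neg (by omega)

theorem Cc_fact {i j : ℕ} (h : i + 2 ≤ j) :
    Cc n A i j = Cc n A (i+1) j * sg n A (i+1) := by
  induction j, h using Nat.le_induction with
  | base =>
      rw [Cc_succ (by omega), Cc_base (le_refl _), Cc_base (by omega), mul_one, one_mul]
  | succ j hj ih =>
      rw [Cc_succ (by omega), Cc_succ (show i + 1 + 1 ≤ j by omega), ih, mul_assoc]

theorem yA_comm' {t m : ℕ} (h : t + 2 ≤ m ∨ m + 2 ≤ t) (a b : A) :
    Commute (yA n A t a) (yA n A m b) := by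
  rcases h with h | h
  · exact yA_comm h a b
  · exact (yA_comm h b a).symm

theorem zz_comm {i m : ℕ} (h : i + 2 ≤ m ∨ m + 2 ≤ i) (a b : A) :
    Commute (zz n A i a) (yA n A m b) :=
  (yA_comm' h a b).mul_left ((yA_comm' h 0 b).inv_left)

theorem zz'_comm {i m : ℕ} (h : i + 2 ≤ m ∨ m + 2 ≤ i) (a b : A) :
    Commute (zz' n A i a) (yA n A m b) :=
  ((yA_comm' h 0 b).inv_left).mul_left (yA_comm' h a b)

theorem Cc_comm {t i j : ℕ} (h : t + 1 ≤ i ∨ j + 1 ≤ t) (a : A) :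
    Commute (yA n A t a) (Cc n A i j) := by
  induction j with
  | zero => exact Commute.one_right _
  | succ j ih =>
      by_cases hij : i + 1 ≤ j
      · rw [Cc_succ hij]
        have h1 : Commute (yA n A t a) (sg n A j) := by
          apply yA_comm'
          rcases h with h | h
          · left; omega
          · right; omega
        have h2 : Commute (yA n A t a) (Cc n A i j) := by
          apply ih; rcases h with h | h
          · left; exact h
          · right; omega
        exact h1.mul_right h2
      · rw [Cc_base (show j + 1 ≤ i + 1 by omega)]
        exact Commute.one_right _

theorem Lconj {t i : ℕ} (h1 : i + 1 ≤ t) :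
    ∀ {j : ℕ}, t + 2 ≤ j → j ≤ n →
      sg n A t * Cc n A i j = Cc n A i j * sg n A (t+1) := by
  intro j h2
  induction j, h2 using Nat.le_induction with
  | base =>
      intro hjn
      have hb := sg_braid (n := n) (A := A) (k := t) (by omega)
      have hc : Commute (sg n A (t+1)) (Cc n A i t) :=
        Cc_comm (Or.inr (le_refl (t+1))) 0
      rw [Cc_succ (show i + 1 ≤ t + 1 by omega), Cc_succ h1]
      calc sg n A t * (sg n A (t+1) * (sg n A t * Cc n A i t))
          = (sg n A t * sg n A (t+1) * sg n A t) * Cc n A i t := by group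
        _ = (sg n A (t+1) * sg n A t * sg n A (t+1)) * Cc n A i t := by rw [hb]
        _ = (sg n A (t+1) * sg n A t) * (sg n A (t+1) * Cc n A i t) := by group
        _ = (sg n A (t+1) * sg n A t) * (Cc n A i t * sg n A (t+1)) := by rw [hc.eq]
        _ = sg n A (t+1) * (sg n A t * Cc n A i t) * sg n A (t+1) := by group
  | succ j hj ih =>
      intro hjn
      have hcj : Commute (sg n A t) (sg n A j) := yA_comm' (Or.inl (by omega)) 0 0
      rw [Cc_succ (show i + 1 ≤ j by omega)]
      calc sg n A t * (sg n A j * Cc n A i j)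
          = sg n A j * (sg n A t * Cc n A i j) := by
            rw [← mul_assoc, hcj.eq, mul_assoc]
        _ = sg n A j * (Cc n A i j * sg n A (t+1)) := by rw [ih (by omega)]
        _ = sg n A j * Cc n A i j * sg n A (t+1) := by group

theorem sq_conj {k : ℕ} (hk : k + 1 < n) :
    (sg n A k)⁻¹ * (sg n A (k+1) * sg n A (k+1)) * sg n A k
      = sg n A (k+1) * (sg n A k * sg n A k) * (sg n A (k+1))⁻¹ := by
  calc (sg n A k)⁻¹ * (sg n A (k+1) * sg n A (k+1)) * sg n A k
      = ((sg n A k)⁻¹ * sg n A (k+1) * sg n A k) *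
          ((sg n A k)⁻¹ * sg n A (k+1) * sg n A k) := by group
    _ = (sg n A (k+1) * sg n A k * (sg n A (k+1))⁻¹) *
          (sg n A (k+1) * sg n A k * (sg n A (k+1))⁻¹) := by rw [hbu (A := A) hk]
    _ = sg n A (k+1) * (sg n A k * sg n A k) * (sg n A (k+1))⁻¹ := by group

theorem Ksq {i : ℕ} :
    ∀ {t : ℕ}, i < t → t < n → ∀ (a : A),
      Commute (sg n A t * sg n A t) (Cc n A i t * zz n A i a * (Cc n A i t)⁻¹) := by
  intro t h
  induction t, h using Nat.le_induction with
  | base =>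
      intro ht a
      rw [Cc_base (le_refl _)]
      have := (K1 (A := A) (k := i) ht a).symm
      simpa using this
  | succ t htt ih =>
      intro ht a
      rw [Cc_succ htt]
      apply Commute.symm
      have e0 : sg n A t * Cc n A i t * zz n A i a * (sg n A t * Cc n A i t)⁻¹
          = sg n A t * (Cc n A i t * zz n A i a * (Cc n A i t)⁻¹) * (sg n A t)⁻¹ := by group
      rw [e0]
      apply (commute_conj_iff _ _ _).mpr
      rw [sq_conj (A := A) (k := t) ht]
      have hCc : Commute (Cc n A i t) (sg n A (t+1)) :=
        (Cc_comm (Or.inr (le_refl (t+1))) 0).symm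
      have hz : Commute (zz n A i a) (sg n A (t+1)) := zz_comm (Or.inl (by omega)) a 0
      have hXv : Commute (Cc n A i t * zz n A i a * (Cc n A i t)⁻¹) (sg n A (t+1)) :=
        (hCc.mul_left hz).mul_left hCc.inv_left
      have hXu : Commute (Cc n A i t * zz n A i a * (Cc n A i t)⁻¹) (sg n A t * sg n A t) :=
        (ih (by omega) a).symm
      simpa [mul_assoc] using hXv.mul_right (hXu.mul_right hXv.inv_right)

theorem Ksq' {j : ℕ} :
    ∀ {t : ℕ}, j < t → t < n → ∀ (a : A),
      Commute (sg n A t * sg n A t) (Cc n A j t * zz' n A j a * (Cc n A j t)⁻¹) := by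
  intro t h
  induction t, h using Nat.le_induction with
  | base =>
      intro ht a
      rw [Cc_base (le_refl _)]
      have := (K1' (A := A) (k := j) ht a).symm
      simpa using this
  | succ t htt ih =>
      intro ht a
      rw [Cc_succ htt]
      apply Commute.symm
      have e0 : sg n A t * Cc n A j t * zz' n A j a * (sg n A t * Cc n A j t)⁻¹
          = sg n A t * (Cc n A j t * zz' n A j a * (Cc n A j t)⁻¹) * (sg n A t)⁻¹ := by group
      rw [e0]
      apply (commute_conj_iff _ _ _).mpr
      rw [sq_conj (A := A) (k := t) ht]
      have hCc : Commute (Cc n A j t) (sg n A (t+1)) :=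
        (Cc_comm (Or.inr (le_refl (t+1))) 0).symm
      have hz : Commute (zz' n A j a) (sg n A (t+1)) := zz'_comm (Or.inl (by omega)) a 0
      have hXv : Commute (Cc n A j t * zz' n A j a * (Cc n A j t)⁻¹) (sg n A (t+1)) :=
        (hCc.mul_left hz).mul_left hCc.inv_left
      have hXu : Commute (Cc n A j t * zz' n A j a * (Cc n A j t)⁻¹) (sg n A t * sg n A t) :=
        (ih (by omega) a).symm
      simpa [mul_assoc] using hXv.mul_right (hXu.mul_right hXv.inv_right)

/-! ## the X family -/

def XX (n : ℕ) (A : Type) [NonUnitalRing A] (i j : ℕ) (a : A) : PBraid n A :=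
  if i < j then Cc n A i j * zz n A i a * (Cc n A i j)⁻¹
  else if j < i then Cc n A j i * zz' n A j a * (Cc n A j i)⁻¹
  else 1

theorem XX_lt {i j : ℕ} (h : i < j) (a : A) :
    XX n A i j a = Cc n A i j * zz n A i a * (Cc n A i j)⁻¹ := if_pos h

theorem XX_gt {i j : ℕ} (h : j < i) (a : A) :
    XX n A i j a = Cc n A j i * zz' n A j a * (Cc n A j i)⁻¹ := by
  rw [XX, if_neg (by omega), if_pos h]

theorem XX_refl {i j : ℕ} (h : i = j) (a : A) : XX n A i j a = 1 := by
  rw [XX, if_neg (by omega), if_neg (by omega)]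

theorem XX_adj (k : ℕ) (a : A) : XX n A k (k+1) a = zz n A k a := by
  rw [XX_lt (by omega), Cc_base (le_refl _)]
  simp

theorem XX_adj' (k : ℕ) (a : A) : XX n A (k+1) k a = zz' n A k a := by
  rw [XX_gt (by omega), Cc_base (le_refl _)]
  simp

def swN (t m : ℕ) : ℕ := if m = t then t + 1 else if m = t + 1 then t else m

theorem swN_eq (t : ℕ) : swN t t = t + 1 := if_pos rfl
theorem swN_eq' (t : ℕ) : swN t (t+1) = t := by
  rw [swN, if_neg (by omega), if_pos rfl]
theorem swN_ne {t m : ℕ} (h1 : m ≠ t) (h2 : m ≠ t + 1) : swN t m = m := by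
  rw [swN, if_neg h1, if_neg h2]

theorem conj_eq_of_commute {G : Type*} [Group G] {g x : G} (h : Commute g x) :
    g * x * g⁻¹ = x := by
  rw [h.eq]; group

/-! ## main equivariance lemma -/

theorem Gconj {t i j : ℕ} (ht : t < n) (hi : i ≤ n) (hj : j ≤ n) (a : A) :
    sg n A t * XX n A i j a * (sg n A t)⁻¹ = XX n A (swN t i) (swN t j) a := by
  rcases Nat.lt_trichotomy i j with hij | hij | hij
  · -- i < j
    rcases (show t+1 < i ∨ t+1 = i ∨ (t = i ∧ j = i+1) ∨ (t = i ∧ i+1 < j)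
        ∨ (i+1 ≤ t ∧ t+2 ≤ j) ∨ (i < t ∧ t+1 = j) ∨ t = j ∨ j+1 ≤ t by omega) with
      h | h | ⟨h1, h2⟩ | ⟨h1, h2⟩ | ⟨h1, h2⟩ | ⟨h1, h2⟩ | h | h
    · -- c1 : t+1 < i, letterwise commutation
      rw [swN_ne (by omega) (by omega), swN_ne (by omega) (by omega)]
      have hC : Commute (sg n A t) (Cc n A i j) := Cc_comm (Or.inl (by omega)) 0
      have hz : Commute (sg n A t) (zz n A i a) := (zz_comm (Or.inr (by omega)) a 0).symm
      rw [XX_lt hij]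
      exact conj_eq_of_commute ((hC.mul_right hz).mul_right hC.inv_right)
    · -- c2 : t+1 = i
      subst h
      rw [swN_eq', swN_ne (by omega) (by omega)]
      have hin : t + 1 < n := by omega
      have hC : Commute (sg n A t) (Cc n A (t+1) j) := Cc_comm (Or.inl (le_refl _)) 0
      have h3 := C3 (n := n) (A := A) (k := t) hin a
      rw [XX_lt hij, XX_lt (show t < j by omega)]
      calc sg n A t * (Cc n A (t+1) j * zz n A (t+1) a * (Cc n A (t+1) j)⁻¹) * (sg n A t)⁻¹
          = (sg n A t * Cc n A (t+1) j) * zz n A (t+1) a *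
              (sg n A t * Cc n A (t+1) j)⁻¹ := by group
        _ = (Cc n A (t+1) j * sg n A t) * zz n A (t+1) a *
              (Cc n A (t+1) j * sg n A t)⁻¹ := by rw [hC.eq]
        _ = Cc n A (t+1) j * (sg n A t * zz n A (t+1) a * (sg n A t)⁻¹) *
              (Cc n A (t+1) j)⁻¹ := by group
        _ = Cc n A (t+1) j * (sg n A (t+1) * zz n A t a * (sg n A (t+1))⁻¹) *
              (Cc n A (t+1) j)⁻¹ := by rw [h3]
        _ = (Cc n A (t+1) j * sg n A (t+1)) * zz n A t a *
              (Cc n A (t+1) j * sg n A (t+1))⁻¹ := by group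
        _ = Cc n A t j * zz n A t a * (Cc n A t j)⁻¹ := by rw [← Cc_fact (by omega)]
    · -- c3 : t = i, j = i+1
      subst h1; subst h2
      rw [swN_eq, swN_eq']
      rw [XX_adj, XX_adj']
      exact sg_zz_sg_inv t a
    · -- c4 : t = i, i+1 < j
      subst h1
      rw [swN_eq, swN_ne (by omega) (by omega)]
      have hin : t + 1 < n := by omega
      have hC : Commute (sg n A t) (Cc n A (t+1) j) := Cc_comm (Or.inl (le_refl _)) 0
      have hE : (sg n A t * sg n A (t+1)) * zz n A t a * (sg n A t * sg n A (t+1))⁻¹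
          = zz n A (t+1) a := by
        rw [E2 (A := A) hin a]; group
      rw [XX_lt hij, XX_lt (show t + 1 < j by omega), Cc_fact (show t + 2 ≤ j by omega)]
      calc sg n A t * (Cc n A (t+1) j * sg n A (t+1) * zz n A t a *
            (Cc n A (t+1) j * sg n A (t+1))⁻¹) * (sg n A t)⁻¹
          = (sg n A t * Cc n A (t+1) j) *
              (sg n A (t+1) * zz n A t a * (sg n A (t+1))⁻¹) *
              (sg n A t * Cc n A (t+1) j)⁻¹ := by group
        _ = (Cc n A (t+1) j * sg n A t) *
              (sg n A (t+1) * zz n A t a * (sg n A (t+1))⁻¹) *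
              (Cc n A (t+1) j * sg n A t)⁻¹ := by rw [hC.eq]
        _ = Cc n A (t+1) j *
              ((sg n A t * sg n A (t+1)) * zz n A t a * (sg n A t * sg n A (t+1))⁻¹) *
              (Cc n A (t+1) j)⁻¹ := by group
        _ = Cc n A (t+1) j * zz n A (t+1) a * (Cc n A (t+1) j)⁻¹ := by rw [hE]
    · -- c5 : interior
      rw [swN_ne (by omega) (by omega), swN_ne (by omega) (by omega)]
      have hL := Lconj (n := n) (A := A) h1 h2 hj
      have hz : Commute (sg n A (t+1)) (zz n A i a) := (zz_comm (Or.inl (by omega)) a 0).symm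
      rw [XX_lt hij]
      calc sg n A t * (Cc n A i j * zz n A i a * (Cc n A i j)⁻¹) * (sg n A t)⁻¹
          = (sg n A t * Cc n A i j) * zz n A i a *
              ((sg n A t * Cc n A i j))⁻¹ := by group
        _ = (Cc n A i j * sg n A (t+1)) * zz n A i a *
              ((Cc n A i j * sg n A (t+1)))⁻¹ := by rw [hL]
        _ = Cc n A i j * (sg n A (t+1) * zz n A i a * (sg n A (t+1))⁻¹) *
              (Cc n A i j)⁻¹ := by group
        _ = Cc n A i j * zz n A i a * (Cc n A i j)⁻¹ := by rw [conj_eq_of_commute hz]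
    · -- c6 : i < t, t+1 = j
      subst h2
      rw [swN_ne (by omega) (by omega), swN_eq']
      have hq := Ksq (n := n) (A := A) h1 ht a
      rw [XX_lt hij, XX_lt h1, Cc_succ (show i + 1 ≤ t by omega)]
      calc sg n A t * (sg n A t * Cc n A i t * zz n A i a *
            (sg n A t * Cc n A i t)⁻¹) * (sg n A t)⁻¹
          = (sg n A t * sg n A t) * (Cc n A i t * zz n A i a * (Cc n A i t)⁻¹) *
              (sg n A t * sg n A t)⁻¹ := by group
        _ = Cc n A i t * zz n A i a * (Cc n A i t)⁻¹ := by rw [hq.eq]; group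
    · -- c7 : t = j
      subst h
      rw [swN_ne (by omega) (by omega), swN_eq]
      rw [XX_lt hij, XX_lt (show i < t + 1 by omega), Cc_succ (show i + 1 ≤ t by omega)]
      group
    · -- c8 : j+1 ≤ t
      rw [swN_ne (by omega) (by omega), swN_ne (by omega) (by omega)]
      have hC : Commute (sg n A t) (Cc n A i j) := Cc_comm (Or.inr (by omega)) 0
      have hz : Commute (sg n A t) (zz n A i a) := (zz_comm (Or.inl (by omega)) a 0).symm
      rw [XX_lt hij]
      exact conj_eq_of_commute ((hC.mul_right hz).mul_right hC.inv_right)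
  · -- i = j
    rw [XX_refl hij, XX_refl (by rw [hij])]
    group
  · -- j < i
    rcases (show t+1 < j ∨ t+1 = j ∨ (t = j ∧ i = j+1) ∨ (t = j ∧ j+1 < i)
        ∨ (j+1 ≤ t ∧ t+2 ≤ i) ∨ (j < t ∧ t+1 = i) ∨ t = i ∨ i+1 ≤ t by omega) with
      h | h | ⟨h1, h2⟩ | ⟨h1, h2⟩ | ⟨h1, h2⟩ | ⟨h1, h2⟩ | h | h
    · -- c1' : t+1 < j
      rw [swN_ne (by omega) (by omega), swN_ne (by omega) (by omega)]
      have hC : Commute (sg n A t) (Cc n A j i) := Cc_comm (Or.inl (by omega)) 0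
      have hz : Commute (sg n A t) (zz' n A j a) := (zz'_comm (Or.inr (by omega)) a 0).symm
      rw [XX_gt hij]
      exact conj_eq_of_commute ((hC.mul_right hz).mul_right hC.inv_right)
    · -- c2' : t+1 = j
      subst h
      rw [swN_eq', swN_ne (by omega) (by omega)]
      have hin : t + 1 < n := by omega
      have hC : Commute (sg n A t) (Cc n A (t+1) i) := Cc_comm (Or.inl (le_refl _)) 0
      have h3 := Dlem' (n := n) (A := A) (k := t) hin a
      rw [XX_gt hij, XX_gt (show t < i by omega)]
      calc sg n A t * (Cc n A (t+1) i * zz' n A (t+1) a * (Cc n A (t+1) i)⁻¹) * (sg n A t)⁻¹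
          = (sg n A t * Cc n A (t+1) i) * zz' n A (t+1) a *
              (sg n A t * Cc n A (t+1) i)⁻¹ := by group
        _ = (Cc n A (t+1) i * sg n A t) * zz' n A (t+1) a *
              (Cc n A (t+1) i * sg n A t)⁻¹ := by rw [hC.eq]
        _ = Cc n A (t+1) i * (sg n A t * zz' n A (t+1) a * (sg n A t)⁻¹) *
              (Cc n A (t+1) i)⁻¹ := by group
        _ = Cc n A (t+1) i * (sg n A (t+1) * zz' n A t a * (sg n A (t+1))⁻¹) *
              (Cc n A (t+1) i)⁻¹ := by rw [h3]
        _ = (Cc n A (t+1) i * sg n A (t+1)) * zz' n A t a *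
              (Cc n A (t+1) i * sg n A (t+1))⁻¹ := by group
        _ = Cc n A t i * zz' n A t a * (Cc n A t i)⁻¹ := by rw [← Cc_fact (by omega)]
    · -- c3' : t = j, i = j+1
      subst h1; subst h2
      rw [swN_eq', swN_eq]
      rw [XX_adj, XX_adj']
      exact sg_zz'_sg_inv t a
    · -- c4' : t = j, j+1 < i
      subst h1
      rw [swN_eq, swN_ne (by omega) (by omega)]
      have hin : t + 1 < n := by omega
      have hC : Commute (sg n A t) (Cc n A (t+1) i) := Cc_comm (Or.inl (le_refl _)) 0
      have hE : (sg n A t * sg n A (t+1)) * zz' n A t a * (sg n A t * sg n A (t+1))⁻¹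
          = zz' n A (t+1) a := by
        rw [E2' (A := A) hin a]; group
      rw [XX_gt hij, XX_gt (show t + 1 < i by omega), Cc_fact (show t + 2 ≤ i by omega)]
      calc sg n A t * (Cc n A (t+1) i * sg n A (t+1) * zz' n A t a *
            (Cc n A (t+1) i * sg n A (t+1))⁻¹) * (sg n A t)⁻¹
          = (sg n A t * Cc n A (t+1) i) *
              (sg n A (t+1) * zz' n A t a * (sg n A (t+1))⁻¹) *
              (sg n A t * Cc n A (t+1) i)⁻¹ := by group
        _ = (Cc n A (t+1) i * sg n A t) *
              (sg n A (t+1) * zz' n A t a * (sg n A (t+1))⁻¹) *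
              (Cc n A (t+1) i * sg n A t)⁻¹ := by rw [hC.eq]
        _ = Cc n A (t+1) i *
              ((sg n A t * sg n A (t+1)) * zz' n A t a * (sg n A t * sg n A (t+1))⁻¹) *
              (Cc n A (t+1) i)⁻¹ := by group
        _ = Cc n A (t+1) i * zz' n A (t+1) a * (Cc n A (t+1) i)⁻¹ := by rw [hE]
    · -- c5' : interior
      rw [swN_ne (by omega) (by omega), swN_ne (by omega) (by omega)]
      have hL := Lconj (n := n) (A := A) h1 h2 hi
      have hz : Commute (sg n A (t+1)) (zz' n A j a) := (zz'_comm (Or.inl (by omega)) a 0).symm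
      rw [XX_gt hij]
      calc sg n A t * (Cc n A j i * zz' n A j a * (Cc n A j i)⁻¹) * (sg n A t)⁻¹
          = (sg n A t * Cc n A j i) * zz' n A j a *
              ((sg n A t * Cc n A j i))⁻¹ := by group
        _ = (Cc n A j i * sg n A (t+1)) * zz' n A j a *
              ((Cc n A j i * sg n A (t+1)))⁻¹ := by rw [hL]
        _ = Cc n A j i * (sg n A (t+1) * zz' n A j a * (sg n A (t+1))⁻¹) *
              (Cc n A j i)⁻¹ := by group
        _ = Cc n A j i * zz' n A j a * (Cc n A j i)⁻¹ := by rw [conj_eq_of_commute hz]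
    · -- c6' : j < t, t+1 = i
      subst h2
      rw [swN_eq', swN_ne (by omega) (by omega)]
      have hq := Ksq' (n := n) (A := A) h1 ht a
      rw [XX_gt hij, XX_gt h1, Cc_succ (show j + 1 ≤ t by omega)]
      calc sg n A t * (sg n A t * Cc n A j t * zz' n A j a *
            (sg n A t * Cc n A j t)⁻¹) * (sg n A t)⁻¹
          = (sg n A t * sg n A t) * (Cc n A j t * zz' n A j a * (Cc n A j t)⁻¹) *
              (sg n A t * sg n A t)⁻¹ := by group
        _ = Cc n A j t * zz' n A j a * (Cc n A j t)⁻¹ := by rw [hq.eq]; group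
    · -- c7' : t = i
      subst h
      rw [swN_eq, swN_ne (by omega) (by omega)]
      rw [XX_gt hij, XX_gt (show j < t + 1 by omega), Cc_succ (show j + 1 ≤ t by omega)]
      group
    · -- c8' : i+1 ≤ t
      rw [swN_ne (by omega) (by omega), swN_ne (by omega) (by omega)]
      have hC : Commute (sg n A t) (Cc n A j i) := Cc_comm (Or.inr (by omega)) 0
      have hz : Commute (sg n A t) (zz' n A j a) := (zz'_comm (Or.inl (by omega)) a 0).symm
      rw [XX_gt hij]
      exact conj_eq_of_commute ((hC.mul_right hz).mul_right hC.inv_right)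

theorem Gmul {t i j : ℕ} (ht : t < n) (hi : i ≤ n) (hj : j ≤ n) (a : A) :
    sg n A t * XX n A i j a = XX n A (swN t i) (swN t j) a * sg n A t := by
  rw [← Gconj (A := A) ht hi hj a]; group

/-- Relators of the classical Artin braid group `Br_{n+1}` with generators
`bgen i`, `i : Fin n`. -/
def bRels (n : ℕ) : Set (FreeGroup (Fin n)) :=
  {r | (∃ i j : Fin n, (i : ℕ) + 2 ≤ (j : ℕ) ∧
          r = FreeGroup.of i * FreeGroup.of j * (FreeGroup.of j * FreeGroup.of i)⁻¹) ∨
       (∃ i j : Fin n, (i : ℕ) + 1 = (j : ℕ) ∧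
          r = FreeGroup.of i * FreeGroup.of j * FreeGroup.of i *
              (FreeGroup.of j * FreeGroup.of i * FreeGroup.of j)⁻¹)}

/-- The classical Artin braid group `Br_{n+1}`. -/
abbrev Braid (n : ℕ) := PresentedGroup (bRels n)

/-- The generator `y_{i+1}` of the braid group. -/
def bgen {n : ℕ} (i : Fin n) : Braid n := PresentedGroup.of i

/-! ## assembly lemmas -/

theorem yA_fin (k : Fin n) (a : A) : yA n A (k : ℕ) a = y k a := yA_lt k.isLt a

theorem sg_fin (k : Fin n) : sg n A (k : ℕ) = y k (0 : A) := yA_fin k 0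

theorem swap_coe (t : Fin n) (i : Fin (n+1)) :
    ((Equiv.swap t.castSucc t.succ i : Fin (n+1)) : ℕ) = swN (t : ℕ) (i : ℕ) := by
  rcases eq_or_ne i t.castSucc with h | h
  · subst h
    rw [Equiv.swap_apply_left]
    simp [Fin.val_succ, Fin.coe_castSucc, swN_eq]
  · rcases eq_or_ne i t.succ with h2 | h2
    · subst h2
      rw [Equiv.swap_apply_right]
      simp [Fin.val_succ, Fin.coe_castSucc, swN_eq']
    · have hv1 : (i : ℕ) ≠ (t : ℕ) := fun hc => h (Fin.ext (by simpa using hc))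
      have hv2 : (i : ℕ) ≠ (t : ℕ) + 1 := fun hc => h2 (Fin.ext (by simpa using hc))
      rw [Equiv.swap_apply_of_ne_of_ne h h2, swN_ne hv1 hv2]

/-- Pure Braid Lemma for `A_{n-1}`: for any generator `y_k^a` of
`Br_n(A)` and any element `ω` of the pure braid group `PBr_n` — the kernel of
the surjection `p : Br_n → S_n`, `y_i ↦ (i, i+1)` — viewed inside `Br_n(A)`
via the homomorphism `f` with `f(y_i) = y_i^0`, there exists `ω' ∈ Br_n`,
independent of `a`, with `y_k^a ω = ω' y_k^a`; consequently `y_k^a (y_k^0)⁻¹`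
commutes with every element of `PBr_n`. -/
theorem stmt6 (n : ℕ) (A : Type) [NonUnitalRing A]
    (p : Braid n →* Equiv.Perm (Fin (n + 1)))
    (hp : ∀ i : Fin n, p (bgen i) = Equiv.swap i.castSucc i.succ)
    (f : Braid n →* PBraid n A)
    (hf : ∀ i : Fin n, f (bgen i) = y i (0:A))
    (ω : Braid n) (hω : ω ∈ p.ker) (k : Fin n) :
    ∃ ω' : Braid n, (∀ a : A, y k a * f ω = f ω' * y k a) ∧
      ∀ a : A, Commute (y k a * (y k (0:A))⁻¹) (f ω) := by
  have hP : ∀ g : Braid n, ∀ (i j : Fin (n+1)) (a : A),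
      f g * XX n A i j a = XX n A (p g i) (p g j) a * f g := by
    have key := PresentedGroup.generated_by (bRels n)
      { carrier := {g : Braid n | ∀ (i j : Fin (n+1)) (a : A),
          f g * XX n A i j a = XX n A (p g i) (p g j) a * f g}
        one_mem' := by
          intro i j a
          simp
        mul_mem' := by
          intro g h hg hh i j a
          simp only [Set.mem_setOf_eq] at hg hh
          rw [map_mul, map_mul]
          calc f g * f h * XX n A ↑i ↑j a
              = f g * (f h * XX n A ↑i ↑j a) := by rw [mul_assoc]
            _ = f g * (XX n A ↑(p h i) ↑(p h j) a * f h) := by rw [hh i j a]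
            _ = (f g * XX n A ↑(p h i) ↑(p h j) a) * f h := by rw [mul_assoc]
            _ = (XX n A ↑(p g (p h i)) ↑(p g (p h j)) a * f g) * f h := by
                rw [hg (p h i) (p h j) a]
            _ = XX n A ↑((p g * p h) i) ↑((p g * p h) j) a * (f g * f h) := by
                rw [Equiv.Perm.mul_apply, Equiv.Perm.mul_apply, mul_assoc]
        inv_mem' := by
          intro g hg i j a
          simp only [Set.mem_setOf_eq] at hg ⊢
          have hE := hg ((p g)⁻¹ i) ((p g)⁻¹ j) a
          rw [show ∀ x, p g ((p g)⁻¹ x) = x from fun x => (p g).apply_symm_apply x,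
            show ∀ x, p g ((p g)⁻¹ x) = x from fun x => (p g).apply_symm_apply x] at hE
          rw [map_inv, map_inv]
          calc (f g)⁻¹ * XX n A ↑i ↑j a
              = (f g)⁻¹ * ((XX n A ↑i ↑j a * f g) * (f g)⁻¹) := by group
            _ = (f g)⁻¹ * ((f g * XX n A ↑((p g)⁻¹ i) ↑((p g)⁻¹ j) a) * (f g)⁻¹) := by
                rw [← hE]
            _ = XX n A ↑((p g)⁻¹ i) ↑((p g)⁻¹ j) a * (f g)⁻¹ := by group }
      ?_
    · intro g
      exact key g
    · intro t
      show ∀ (i j : Fin (n+1)) (a : A),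
        f (bgen t) * XX n A i j a = XX n A (p (bgen t) i) (p (bgen t) j) a * f (bgen t)
      intro i j a
      rw [hf t, hp t, swap_coe t i, swap_coe t j, ← sg_fin t]
      exact Gmul t.isLt (Nat.lt_succ_iff.mp i.isLt) (Nat.lt_succ_iff.mp j.isLt) a
  have hpω : p ω = 1 := hω
  have hzz : ∀ a : A, f ω * zz n A (k : ℕ) a = zz n A (k : ℕ) a * f ω := by
    intro a
    have h := hP ω k.castSucc k.succ a
    rw [hpω] at h
    simpa [Fin.coe_castSucc, Fin.val_succ, XX_adj] using h
  have hzz' : ∀ a : A, f ω * zz' n A (k : ℕ) a = zz' n A (k : ℕ) a * f ω := by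
    intro a
    have h := hP ω k.succ k.castSucc a
    rw [hpω] at h
    simpa [Fin.coe_castSucc, Fin.val_succ, XX_adj'] using h
  have hzy : ∀ a : A, zz' n A (k : ℕ) a = (y k (0:A))⁻¹ * y k a := by
    intro a
    rw [zz', sg_fin, yA_fin]
  refine ⟨bgen k * ω * (bgen k)⁻¹, ?_, ?_⟩
  · intro a
    have hz := hzz' a
    rw [hzy] at hz
    rw [map_mul, map_mul, map_inv, hf k]
    calc y k a * f ω
        = y k 0 * (((y k 0)⁻¹ * y k a) * f ω) := by group
      _ = y k 0 * (f ω * ((y k 0)⁻¹ * y k a)) := by rw [← hz]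
      _ = y k 0 * f ω * (y k 0)⁻¹ * y k a := by group
  · intro a
    have hz := hzz a
    have : zz n A (k : ℕ) a = y k a * (y k (0:A))⁻¹ := by
      rw [zz, sg_fin, yA_fin]
    rw [this] at hz
    exact hz.symm
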